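/- arXiv:math/0105221 — 4 statements merged into one kernel-verified Lean document; each statement's English description precedes it below -/
import Mathlib

section
/- Let X ⊂ B^k be measurable and p ∈ B^k. Suppose that for almost every line l through p (with respect to the natural probability measure on the (k−1)-dimensional projective space of directions), p is a density point of X ∩ l in l with respect to one-dimensional Lebesgue measure on l. Then p is a Lebesgue density point of X in B^k, i.e. |X ∩ B_ε(p)| / |B_ε(p)| → 1 as ε → 0. -/
open MeasureTheory Set Filter Topology Function
open scoped ENNReal

noncomputable section

/-- The dynamical interval `I = [-1,1]`. -/
def II : Set ℝ := Set.Icc (-1) 1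

/-- The one-dimensional parameter interval `B¹ = [-1,1]`. -/
def B1 : Set ℝ := Set.Icc (-1) 1

/-- A unimodal map: a `C²` even map `f : I → I` with `f(-1) = -1`, `Df(-1) ≥ 1`
(and `D²f(-1) < 0` if `Df(-1) = 1`), whose unique critical point is `0`.
We model maps of `I` as globally defined real maps. -/
structure IsUnimodal (f : ℝ → ℝ) : Prop where
  smooth : ContDiff ℝ 2 f
  mapsTo : Set.MapsTo f II II
  even : ∀ x ∈ II, f (-x) = f x
  fixedPt : f (-1) = -1
  deriv_ge_one : 1 ≤ deriv f (-1)
  second_deriv_neg : deriv f (-1) = 1 → iteratedDeriv 2 f (-1) < 0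
  critical : deriv f 0 = 0
  critical_unique : ∀ x ∈ II, deriv f x = 0 → x = 0

/-- The Schwarzian derivative `Sf = D³f/Df − (3/2)(D²f/Df)²`. -/
def Schwarzian (f : ℝ → ℝ) (x : ℝ) : ℝ :=
  iteratedDeriv 3 f x / deriv f x - (3 / 2) * (iteratedDeriv 2 f x / deriv f x) ^ 2

/-- An S-unimodal map: a `C³` unimodal map with negative Schwarzian derivative on
`I ∖ {0}` and non-degenerate critical point. -/
structure IsSUnimodal (f : ℝ → ℝ) extends IsUnimodal f : Prop where
  smooth3 : ContDiff ℝ 3 f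
  schwarzian_neg : ∀ x ∈ II, x ≠ 0 → Schwarzian f x < 0
  nondeg : iteratedDeriv 2 f 0 ≠ 0

/-- `x` is a periodic point of (minimal) period `n ≥ 1` for `f`. -/
def PeriodicOfPeriod (f : ℝ → ℝ) (n : ℕ) (x : ℝ) : Prop :=
  1 ≤ n ∧ f^[n] x = x ∧ ∀ m, 1 ≤ m → m < n → f^[m] x ≠ x

/-- A hyperbolic periodic attractor in `A`: periodic point of period `n` with
multiplier `|Df^n(x)| < 1`. -/
def AttractingPeriodicPt (f : ℝ → ℝ) (A : Set ℝ) (n : ℕ) (x : ℝ) : Prop :=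
  x ∈ A ∧ PeriodicOfPeriod f n x ∧ |deriv (f^[n]) x| < 1

/-- `f` is regular on `A`: it has a hyperbolic periodic attractor in `A`. -/
def RegularOn (f : ℝ → ℝ) (A : Set ℝ) : Prop :=
  ∃ n x, AttractingPeriodicPt f A n x

/-- `f` is regular (on the dynamical interval `I`). -/
def Regular (f : ℝ → ℝ) : Prop := RegularOn f II

/-- All periodic orbits of `f` in `A` are repelling: `|Df^n(x)| > 1`. -/
def AllPeriodicRepelling (f : ℝ → ℝ) (A : Set ℝ) : Prop :=
  ∀ n x, x ∈ A → PeriodicOfPeriod f n x → 1 < |deriv (f^[n]) x|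

/-- The Collet-Eckmann condition: `|Df^n(f(0))| > C λ^n` for all `n > 0`. -/
def CollEck (f : ℝ → ℝ) : Prop :=
  ∃ C > 0, ∃ lam > 1, ∀ n : ℕ, 0 < n → C * lam ^ n < |deriv (f^[n]) (f 0)|

/-- The Backwards Collet-Eckmann condition on `A`: `|Df^n(x)| > C λ^n`
whenever `f^n(x) = 0`, `n > 0`. -/
def BackCollEck (f : ℝ → ℝ) (A : Set ℝ) : Prop :=
  ∃ C > 0, ∃ lam > 1, ∀ n : ℕ, 0 < n → ∀ x ∈ A, f^[n] x = 0 →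
    C * lam ^ n < |deriv (f^[n]) x|

/-- Polynomial Recurrence: for some `α > 0`, `|f^n(0)| > n^{-α}` for all large `n`. -/
def PolyRec (f : ℝ → ℝ) : Prop :=
  ∃ α > (0 : ℝ), ∀ᶠ n : ℕ in atTop, (n : ℝ) ^ (-α) < |f^[n] 0|

/-- Subexponential Recurrence: for every `α > 0`, `|f^n(0)| > e^{-αn}` for all large `n`. -/
def SubexpRec (f : ℝ → ℝ) : Prop :=
  ∀ α > (0 : ℝ), ∀ᶠ n : ℕ in atTop, Real.exp (-α * n) < |f^[n] 0|

/-- The Birkhoff-like sum appearing in the Weak Regularity condition. -/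
def wrSum (f : ℝ → ℝ) (δ : ℝ) (n : ℕ) : ℝ :=
  (1 / n) * ∑ k ∈ Finset.Icc 1 n,
    if f^[k] 0 ∈ Set.Ioo (-δ) δ then Real.log |deriv f (f^[k] 0)| else 0

/-- Weak Regularity:
`lim_{δ→0⁺} liminf_{n→∞} (1/n) Σ_{1 ≤ k ≤ n, f^k(0) ∈ (−δ,δ)} ln|Df(f^k(0))| = 0`. -/
def WeaklyRegular (f : ℝ → ℝ) : Prop :=
  Tendsto (fun δ : ℝ => Filter.liminf (fun n : ℕ => wrSum f δ n) atTop)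
    (nhdsWithin 0 (Set.Ioi 0)) (nhds 0)

/-- Topological conjugacy between `f` on `A` and `g` on `B` (for compact intervals, a
continuous bijection is automatically a homeomorphism). -/
def TopConjOn (f g : ℝ → ℝ) (A B : Set ℝ) : Prop :=
  ∃ h : ℝ → ℝ, ContinuousOn h A ∧ Set.BijOn h A B ∧ ∀ x ∈ A, h (f x) = g (h x)

/-- Hybrid equivalence: topological conjugacy, and in the presence of attracting
hyperbolic periodic orbits, equality of the multipliers. -/
def HybridEquivOn (f g : ℝ → ℝ) (A B : Set ℝ) : Prop :=
  TopConjOn f g A B ∧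
  ∀ n x m y, AttractingPeriodicPt f A n x → AttractingPeriodicPt g B m y →
    |deriv (f^[n]) x| = |deriv (g^[m]) y|

/-- The quadratic map `q_t(x) = t - x²`. -/
def qmap (t : ℝ) : ℝ → ℝ := fun x => t - x ^ 2

/-- The right endpoint `β_t` of the invariant interval of `q_t`:
the orientation-reversing fixed endpoint `q_t(-β_t) = -β_t`. -/
def qβ (t : ℝ) : ℝ := (1 + Real.sqrt (1 + 4 * t)) / 2

/-- The invariant interval `I_t = [-β_t, β_t]` of the quadratic map `q_t`. -/
def qI (t : ℝ) : Set ℝ := Set.Icc (-qβ t) (qβ t)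

/-- A quasisymmetric homeomorphism of `ℝ`. -/
def IsQS (H : ℝ → ℝ) : Prop :=
  Continuous H ∧ Function.Bijective H ∧ ∃ k > (1 : ℝ), ∀ x : ℝ, ∀ t > (0 : ℝ),
    1 / k ≤ (H (x + t) - H x) / (H x - H (x - t)) ∧
    (H (x + t) - H x) / (H x - H (x - t)) ≤ k

/-- The parameter space `ℝ^k`. -/
abbrev EE (k : ℕ) := EuclideanSpace ℝ (Fin k)

/-- The closed unit parameter ball `B^k ⊂ ℝ^k`. -/
def pBall (k : ℕ) : Set (EE k) := Metric.closedBall 0 1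

/-- The uncurried version of a family. -/
def uncurryF {k : ℕ} (F : EE k → ℝ → ℝ) : EE k × ℝ → ℝ := fun q => F q.1 q.2

/-- A `C²` `k`-parameter family of unimodal maps. -/
def IsC2Fam (k : ℕ) (F : EE k → ℝ → ℝ) : Prop :=
  ContDiff ℝ 2 (uncurryF F) ∧ ∀ p ∈ pBall k, IsUnimodal (F p)

/-- An analytic `k`-parameter family of S-unimodal maps. -/
def IsAnalyticSFam (k : ℕ) (F : EE k → ℝ → ℝ) : Prop :=
  AnalyticOnNhd ℝ (uncurryF F) (pBall k ×ˢ II) ∧ ∀ p ∈ pBall k, IsSUnimodal (F p)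

/-- A `C^r` `k`-parameter family of S-unimodal maps. -/
def IsCrSFam (r k : ℕ) (F : EE k → ℝ → ℝ) : Prop :=
  ContDiff ℝ r (uncurryF F) ∧ ∀ p ∈ pBall k, IsSUnimodal (F p)

/-- A family is non-trivial if some parameter is regular. -/
def NonTrivialFam (k : ℕ) (F : EE k → ℝ → ℝ) : Prop :=
  ∃ p ∈ pBall k, Regular (F p)

/-- `C^r`-closeness of two families: all partial derivatives up to order `r`
are `ε`-close on `B^k × I`. -/
def CrClose (r k : ℕ) (ε : ℝ) (F G : EE k → ℝ → ℝ) : Prop :=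
  ∀ i : ℕ, i ≤ r → ∀ q ∈ pBall k ×ˢ II,
    ‖iteratedFDeriv ℝ i (uncurryF F) q - iteratedFDeriv ℝ i (uncurryF G) q‖ < ε

/-- Convergence of a sequence of families in the `C²` topology: uniform convergence on
`B^k × I` of the maps and their partial derivatives up to order 2. -/
def C2TendstoFam (k : ℕ) (Fn : ℕ → EE k → ℝ → ℝ) (F : EE k → ℝ → ℝ) : Prop :=
  ∀ i : ℕ, i ≤ 2 → TendstoUniformlyOn
    (fun n => iteratedFDeriv ℝ i (uncurryF (Fn n)))
    (iteratedFDeriv ℝ i (uncurryF F)) atTop (pBall k ×ˢ II)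

/-- A `C²` one-parameter family of unimodal maps (parameter in `B¹ = [-1,1]`). -/
def IsC2Fam1 (F : ℝ → ℝ → ℝ) : Prop :=
  ContDiff ℝ 2 (fun q : ℝ × ℝ => F q.1 q.2) ∧ ∀ t ∈ B1, IsUnimodal (F t)

/-- An analytic one-parameter family of S-unimodal maps. -/
def IsAnalyticSFam1 (F : ℝ → ℝ → ℝ) : Prop :=
  AnalyticOnNhd ℝ (fun q : ℝ × ℝ => F q.1 q.2) (B1 ×ˢ II) ∧ ∀ t ∈ B1, IsSUnimodal (F t)

/-- The Tsujii transversality sum `Σ_j v(f^j(0))/Df^j(f(0))` for a one-parameter family,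
where `v = (∂/∂t) f_t |_{t=t₀}` and `f = f_{t₀}`. -/
def tsujiiSum1 (F : ℝ → ℝ → ℝ) (t₀ : ℝ) : ℝ :=
  ∑' j : ℕ, deriv (fun t => F t ((F t₀)^[j] 0)) t₀ / deriv ((F t₀)^[j]) (F t₀ 0)

/-- The Tsujii conditions for a one-parameter family at parameter `t₀`: `f_{t₀}`
satisfies CE, BCE, SE, has quadratic critical point, all periodic orbits repelling,
and the Tsujii transversality condition holds. -/
def TsujiiConds1 (F : ℝ → ℝ → ℝ) (t₀ : ℝ) : Prop :=
  CollEck (F t₀) ∧ BackCollEck (F t₀) II ∧ SubexpRec (F t₀) ∧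
  iteratedDeriv 2 (F t₀) 0 ≠ 0 ∧ AllPeriodicRepelling (F t₀) II ∧
  tsujiiSum1 F t₀ ≠ 0

/-- Tsujii transversality for a `k`-parameter family at `p`: some affine line
`t ↦ p + (t - t₀)w` through `p`, mapping `B¹` into `B^k` with `t₀` interior, along which
the one-parameter transversality sum is non-zero. -/
def TsujiiTransverseK (k : ℕ) (F : EE k → ℝ → ℝ) (p : EE k) : Prop :=
  ∃ (w : EE k) (t₀ : ℝ), t₀ ∈ Set.Ioo (-1 : ℝ) 1 ∧
    (∀ t ∈ Set.Icc (-1 : ℝ) 1, p + (t - t₀) • w ∈ pBall k) ∧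
    (∑' j : ℕ, deriv (fun t : ℝ => F (p + (t - t₀) • w) ((F p)^[j] 0)) t₀ /
        deriv ((F p)^[j]) (F p 0)) ≠ 0

/-- The Tsujii conditions for a `k`-parameter family at parameter `p`. -/
def TsujiiCondsK (k : ℕ) (F : EE k → ℝ → ℝ) (p : EE k) : Prop :=
  CollEck (F p) ∧ BackCollEck (F p) II ∧ SubexpRec (F p) ∧
  iteratedDeriv 2 (F p) 0 ≠ 0 ∧ AllPeriodicRepelling (F p) II ∧
  TsujiiTransverseK k F p

/-- `t₀` is a one-dimensional Lebesgue density point of `S`. -/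
def DensityPt1 (S : Set ℝ) (t₀ : ℝ) : Prop :=
  Tendsto (fun ε => volume (S ∩ Set.Icc (t₀ - ε) (t₀ + ε)) / volume (Set.Icc (t₀ - ε) (t₀ + ε)))
    (nhdsWithin 0 (Set.Ioi 0)) (nhds 1)

/-- `p` is a Lebesgue density point of `S ⊂ ℝ^k`. -/
def DensityPtK (k : ℕ) (S : Set (EE k)) (p : EE k) : Prop :=
  Tendsto (fun ε => volume (S ∩ Metric.closedBall p ε) / volume (Metric.closedBall p ε))
    (nhdsWithin 0 (Set.Ioi 0)) (nhds 1)

/-- `p` is a density point of `X` along the line through `p` with direction `v`. -/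
def DensityAlong (k : ℕ) (X : Set (EE k)) (p : EE k) (v : EE k) : Prop :=
  Tendsto (fun ε => volume {r ∈ Set.Ioo (-ε) ε | p + r • v ∈ X} / volume (Set.Ioo (-ε) (ε : ℝ)))
    (nhdsWithin 0 (Set.Ioi 0)) (nhds 1)

/-- The set `X_F` of good parameters of a family: regular, or Tsujii conditions
together with Weak Regularity. -/
def XF (k : ℕ) (F : EE k → ℝ → ℝ) : Set (EE k) :=
  {p ∈ pBall k | Regular (F p) ∨ (TsujiiCondsK k F p ∧ WeaklyRegular (F p))}

/-- The density `d(F,Y) = |Y ∩ X_F|/|Y|`. -/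
def dDens (k : ℕ) (F : EE k → ℝ → ℝ) (Y : Set (EE k)) : ℝ :=
  (volume (Y ∩ XF k F)).toReal / (volume Y).toReal

/-- The `C²` distance between two families, measured on `B^k × I`. -/
def famDist (k : ℕ) (F G : EE k → ℝ → ℝ) : ℝ :=
  sSup ((fun q => ∑ i ∈ Finset.range 3,
      ‖iteratedFDeriv ℝ i (uncurryF F) q - iteratedFDeriv ℝ i (uncurryF G) q‖) ''
    (pBall k ×ˢ II))

/-- `liminf_{ε→0⁺} g(ε)`. -/
def liminfSmall (g : ℝ → ℝ) : ℝ :=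
  ⨆ η ∈ Set.Ioi (0 : ℝ), sInf (g '' Set.Ioo 0 η)

/-- `D^-(F,p)`: the liminf, over `C²` families `F̂ → F` fixing `f̂_p = f_p`, of
`liminf_{ε→0} d(F̂, B_ε(p))`. -/
def Dminus (k : ℕ) (F : EE k → ℝ → ℝ) (p : EE k) : ℝ :=
  ⨆ δ ∈ Set.Ioi (0 : ℝ),
    sInf ((fun G => liminfSmall (fun ε => dDens k G (Metric.ball p ε))) ''
      {G | IsC2Fam k G ∧ famDist k F G < δ ∧ G p = F p})

/-- `D^+(F,p) = liminf_{ε→0} liminf_{F̂→F} d(F̂, B_ε(p))`. -/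
def Dplus (k : ℕ) (F : EE k → ℝ → ℝ) (p : EE k) : ℝ :=
  ⨆ η ∈ Set.Ioi (0 : ℝ),
    sInf ((fun ε => ⨆ δ ∈ Set.Ioi (0 : ℝ),
        sInf ((fun G => dDens k G (Metric.ball p ε)) ''
          {G | IsC2Fam k G ∧ famDist k F G < δ})) '' Set.Ioo 0 η)



/-- ENNReal ratio lemma: if `a + b = t` with `t` nonzero and finite, then `a / t = 1 - b / t`. -/
lemma enn_ratio {a b t : ℝ≥0∞} (hab : a + b = t) (ht0 : t ≠ 0) (htt : t ≠ ∞) :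
    a / t = 1 - b / t := by
  have hb : b ≤ t := hab ▸ le_add_self
  have hbt : b ≠ ∞ := (hb.trans_lt (lt_top_iff_ne_top.2 htt)).ne
  have ha : a = t - b := by
    rw [← hab, ENNReal.add_sub_cancel_right hbt]
  rw [ha, ENNReal.sub_div (fun _ _ => ht0), ENNReal.div_self ht0 htt]

/-- Polar coordinates formula for the measure of a measurable set. -/
lemma polar_meas {k : ℕ} (hk : 1 ≤ k) (S : Set (EE k)) (hS : MeasurableSet S) :
    volume S = ∫⁻ v, Measure.volumeIoiPow (k - 1)
        {r : Set.Ioi (0:ℝ) | (r : ℝ) • (v : EE k) ∈ S} ∂((volume : Measure (EE k)).toSphere) := by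
  haveI : Nontrivial (EE k) := Module.nontrivial_of_finrank_pos (R := ℝ)
    (by simp only [finrank_euclideanSpace, Fintype.card_fin]; omega)
  set e := homeomorphUnitSphereProd (EE k) with he
  have hS' : MeasurableSet (Subtype.val ⁻¹' S : Set ({(0:EE k)}ᶜ : Set (EE k))) :=
    hS.preimage measurable_subtype_coe
  set T : Set (Metric.sphere (0:EE k) 1 × Set.Ioi (0:ℝ)) := e.symm ⁻¹' (Subtype.val ⁻¹' S) with hT
  have hTm : MeasurableSet T := hS'.preimage e.symm.measurable
  have h1 : volume S = Measure.comap Subtype.val (volume : Measure (EE k)) (Subtype.val ⁻¹' S : Set ({(0:EE k)}ᶜ : Set (EE k))) := by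
    rw [comap_subtype_coe_apply (measurableSet_singleton (0:EE k)).compl,
      Subtype.image_preimage_coe, Set.inter_comm, ← Set.diff_eq,
      measure_diff_null (measure_singleton _)]
  have h2 : Measure.comap Subtype.val (volume : Measure (EE k)) (Subtype.val ⁻¹' S : Set ({(0:EE k)}ᶜ : Set (EE k)))
      = ((volume : Measure (EE k)).toSphere.prod
          (Measure.volumeIoiPow (Module.finrank ℝ (EE k) - 1))) T := by
    have := (Measure.measurePreserving_homeomorphUnitSphereProd
      (volume : Measure (EE k))).measure_preimage hTm.nullMeasurableSet
    rw [← this]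
    congr 1
    ext x
    simp [T, he]
  have h3 : ((volume : Measure (EE k)).toSphere.prod
        (Measure.volumeIoiPow (Module.finrank ℝ (EE k) - 1))) T
      = ∫⁻ v, Measure.volumeIoiPow (Module.finrank ℝ (EE k) - 1) (Prod.mk v ⁻¹' T)
          ∂((volume : Measure (EE k)).toSphere) :=
    Measure.prod_apply hTm
  have h4 : ∀ v : Metric.sphere (0:EE k) 1, Prod.mk v ⁻¹' T
      = {r : Set.Ioi (0:ℝ) | (r : ℝ) • (v : EE k) ∈ S} := by
    intro v
    ext r
    simp [T, he]
  have hfr : Module.finrank ℝ (EE k) = k := by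
    simp [finrank_euclideanSpace]
  rw [h1, h2, h3]
  simp_rw [h4, hfr]
lemma volumeIoiPow_bound {n : ℕ} {ε : ℝ} (hε : 0 ≤ ε) {A : Set (Set.Ioi (0:ℝ))}
    (hA : MeasurableSet A) (hle : ∀ r ∈ A, (r : ℝ) ≤ ε) :
    Measure.volumeIoiPow n A ≤ ENNReal.ofReal (ε ^ n) * volume (Subtype.val '' A) := by
  rw [Measure.volumeIoiPow, withDensity_apply _ hA]
  calc ∫⁻ r in A, ENNReal.ofReal ((r:ℝ) ^ n) ∂(Measure.comap Subtype.val volume)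
      ≤ ∫⁻ _ in A, ENNReal.ofReal (ε ^ n) ∂(Measure.comap Subtype.val volume) := by
        refine setLIntegral_mono measurable_const fun r hr => ?_
        exact ENNReal.ofReal_le_ofReal (pow_le_pow_left₀ r.2.out.le (hle r hr) n)
    _ = ENNReal.ofReal (ε ^ n) * (Measure.comap Subtype.val volume) A := setLIntegral_const _ _
    _ = _ := by rw [comap_subtype_coe_apply measurableSet_Ioi]

lemma aux_ac (a b I D : ℝ≥0∞) : a * (I * b) / D = I * (a * b / D) := by
  rw [div_eq_mul_inv, div_eq_mul_inv, mul_left_comm, mul_assoc]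

/-- If `p` is a density point of a measurable set `X ⊆ B^k` along
almost every line through `p` (equivalently, for almost every direction on the unit
sphere, with respect to the natural measure), then `p` is a Lebesgue density point
of `X` in `ℝ^k`. -/
theorem density_along_lines (k : ℕ) (hk : 1 ≤ k) (X : Set (EE k))
    (hX : MeasurableSet X) (hXB : X ⊆ pBall k) (p : EE k) (hp : p ∈ pBall k)
    (h : ∀ᵐ v ∂((volume : Measure (EE k)).toSphere),
      DensityAlong k X p v.val) :
    DensityPtK k X p := by
  haveI : Nontrivial (EE k) := Module.nontrivial_of_finrank_pos (R := ℝ)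
    (by simp only [finrank_euclideanSpace, Fintype.card_fin]; omega)
  set ν := (volume : Measure (EE k)).toSphere with hν
  set c := volume (Metric.ball (0 : EE k) 1) with hc
  have hc0 : c ≠ 0 := (Metric.measure_ball_pos volume _ one_pos).ne'
  have hcT : c ≠ ∞ := measure_ball_lt_top.ne
  set m : ℝ → Metric.sphere (0:EE k) 1 → ℝ≥0∞ := fun ε v =>
    volume {r ∈ Set.Ioo (-ε) ε | p + r • (v : EE k) ∈ Xᶜ} with hm
  set Ψ : ℝ → Metric.sphere (0:EE k) 1 → ℝ≥0∞ := fun ε v =>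
    m ε v / ENNReal.ofReal (2*ε) with hΨ
  have hIoo : ∀ ε : ℝ, volume (Set.Ioo (-ε) ε) = ENNReal.ofReal (2*ε) := by
    intro ε; rw [Real.volume_Ioo]; congr 1; ring
  have hline : ∀ v : Metric.sphere (0:EE k) 1, Measurable fun r : ℝ => p + r • (v : EE k) :=
    fun v => (continuous_const.add (continuous_id.smul continuous_const)).measurable
  -- splitting of the 1-d interval
  have hsplit : ∀ (ε : ℝ) (v : Metric.sphere (0:EE k) 1),
      volume {r ∈ Set.Ioo (-ε) ε | p + r • (v : EE k) ∈ X} + m ε v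
        = ENNReal.ofReal (2*ε) := by
    intro ε v
    have e1 : {r ∈ Set.Ioo (-ε) ε | p + r • (v : EE k) ∈ X}
        = Set.Ioo (-ε) ε ∩ (fun r : ℝ => p + r • (v : EE k)) ⁻¹' X := rfl
    have e2 : {r ∈ Set.Ioo (-ε) ε | p + r • (v : EE k) ∈ Xᶜ}
        = Set.Ioo (-ε) ε \ (fun r : ℝ => p + r • (v : EE k)) ⁻¹' X := by
      rw [Set.diff_eq, ← Set.preimage_compl]; rfl
    rw [hm]; simp only []
    rw [e1, e2, measure_inter_add_diff _ (hX.preimage (hline v)), hIoo]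
  -- a.e. convergence of Ψ
  have hΨ_tend : ∀ᵐ v ∂ν, Tendsto (fun ε => Ψ ε v) (𝓝[>] (0:ℝ)) (𝓝 0) := by
    filter_upwards [h] with v hv
    have h2ε : ∀ᶠ ε in 𝓝[>] (0:ℝ), ENNReal.ofReal (2*ε) ≠ 0 ∧ (ENNReal.ofReal (2*ε) ≠ ∞) := by
      filter_upwards [self_mem_nhdsWithin] with ε (hε : 0 < ε)
      exact ⟨(ENNReal.ofReal_pos.2 (by linarith)).ne', ENNReal.ofReal_ne_top⟩
    have hX1 : Tendsto (fun ε => volume {r ∈ Set.Ioo (-ε) ε | p + r • (v : EE k) ∈ X}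
        / ENNReal.ofReal (2*ε)) (𝓝[>] (0:ℝ)) (𝓝 1) := by
      refine hv.congr (fun ε => ?_)
      rw [hIoo]
    have : Tendsto (fun ε => 1 - volume {r ∈ Set.Ioo (-ε) ε | p + r • (v : EE k) ∈ X}
        / ENNReal.ofReal (2*ε)) (𝓝[>] (0:ℝ)) (𝓝 0) := by
      have := ENNReal.Tendsto.sub (tendsto_const_nhds (x := (1:ℝ≥0∞))) hX1 (Or.inl ENNReal.one_ne_top)
      simpa using this
    refine Tendsto.congr' ?_ this
    filter_upwards [h2ε] with ε hε
    rw [hΨ]; simp only []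
    rw [eq_comm, enn_ratio (by rw [add_comm]; exact hsplit ε v) hε.1 hε.2]
  -- measurability of Ψ
  have hm_meas : ∀ ε : ℝ, Measurable (m ε) := by
    intro ε
    have hW : MeasurableSet {z : Metric.sphere (0:EE k) 1 × ℝ |
        z.2 ∈ Set.Ioo (-ε) ε ∧ p + z.2 • (z.1 : EE k) ∈ Xᶜ} := by
      refine (measurable_snd measurableSet_Ioo).inter ?_
      exact (continuous_const.add (continuous_snd.smul
        (continuous_subtype_val.comp continuous_fst))).measurable hX.compl
    exact measurable_measure_prodMk_left (ν := (volume : Measure ℝ)) hW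
  have hΨ_meas : ∀ ε : ℝ, Measurable (Ψ ε) := fun ε => (hm_meas ε).div_const _
  -- convergence of the integrals
  have hI : Tendsto (fun ε => ∫⁻ v, Ψ ε v ∂ν) (𝓝[>] (0:ℝ)) (𝓝 0) := by
    have h0 : (0:ℝ≥0∞) = ∫⁻ _v, (0:ℝ≥0∞) ∂ν := by simp
    rw [h0]
    refine tendsto_lintegral_filter_of_dominated_convergence (fun _ => (1:ℝ≥0∞))
      (Eventually.of_forall fun ε => hΨ_meas ε) ?_ (by simp) hΨ_tend
    refine Eventually.of_forall fun ε => Eventually.of_forall fun v => ?_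
    rw [hΨ]; simp only []
    refine ENNReal.div_le_of_le_mul ?_
    rw [one_mul, ← hIoo]
    exact measure_mono (Set.sep_subset _ _)
  -- translation + polar estimate
  set S : ℝ → Set (EE k) := fun ε => Metric.closedBall 0 ε ∩ (fun y => p + y) ⁻¹' Xᶜ with hs
  have hSm : ∀ ε, MeasurableSet (S ε) := fun ε =>
    measurableSet_closedBall.inter (hX.compl.preimage (measurable_const_add p))
  have htrans : ∀ ε : ℝ, volume (Metric.closedBall p ε \ X) = volume (S ε) := by
    intro ε
    rw [← measure_preimage_add volume p (Metric.closedBall p ε \ X)]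
    congr 1
    ext y
    simp [hs, Metric.mem_closedBall, dist_eq_norm, Set.mem_diff, add_sub_cancel_left]
  have hpolar : ∀ ε : ℝ, 0 < ε →
      volume (S ε) ≤ ENNReal.ofReal (ε^(k-1)) * ∫⁻ v, m ε v ∂ν := by
    intro ε hε
    rw [polar_meas hk _ (hSm ε), ← lintegral_const_mul' _ _ ENNReal.ofReal_ne_top]
    refine lintegral_mono fun v => ?_
    have hAm : MeasurableSet {r : Set.Ioi (0:ℝ) | (r:ℝ) • (v : EE k) ∈ S ε} :=
      (hSm ε).preimage ((continuous_subtype_val.smul continuous_const).measurable)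
    have hnv : ‖(v : EE k)‖ = 1 := by
      have := v.2
      rwa [mem_sphere_zero_iff_norm] at this
    have hle : ∀ r : Set.Ioi (0:ℝ), r ∈ {r : Set.Ioi (0:ℝ) | (r:ℝ) • (v : EE k) ∈ S ε}
        → (r:ℝ) ≤ ε := by
      intro r hr
      have h1 : ((r:ℝ) • (v : EE k)) ∈ Metric.closedBall (0:EE k) ε := hr.1
      rw [Metric.mem_closedBall, dist_zero_right, norm_smul, hnv, mul_one,
        Real.norm_eq_abs, abs_of_pos r.2.out] at h1
      exact h1
    refine (volumeIoiPow_bound hε.le hAm hle).trans ?_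
    refine mul_le_mul_right ?_ _
    have hsub : Subtype.val '' {r : Set.Ioi (0:ℝ) | (r:ℝ) • (v : EE k) ∈ S ε}
        ⊆ {r ∈ Set.Ioo (-ε) ε | p + r • (v : EE k) ∈ Xᶜ} ∪ {ε} := by
      rintro r ⟨⟨r', hr'⟩, hrS, rfl⟩
      rcases eq_or_lt_of_le (hle _ hrS) with hrε | hrε
      · exact Or.inr (by simpa using hrε)
      · exact Or.inl ⟨⟨by simp only [Set.mem_Ioi] at hr'; linarith, hrε⟩, hrS.2⟩
    calc volume (Subtype.val '' {r : Set.Ioi (0:ℝ) | (r:ℝ) • (v : EE k) ∈ S ε})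
        ≤ volume ({r ∈ Set.Ioo (-ε) ε | p + r • (v : EE k) ∈ Xᶜ} ∪ {ε}) := measure_mono hsub
      _ ≤ m ε v + volume ({ε} : Set ℝ) := measure_union_le _ _
      _ = m ε v := by rw [Real.volume_singleton, add_zero]
  -- the key cancellation
  have hkey : ∀ ε : ℝ, 0 < ε → ENNReal.ofReal (ε^(k-1)) * ENNReal.ofReal (2*ε)
      / (ENNReal.ofReal (ε^k) * c) = ENNReal.ofReal 2 / c := by
    intro ε hε
    rw [← ENNReal.ofReal_mul (by positivity)]
    have h2 : ε^(k-1) * (2*ε) = ε^k * 2 := by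
      rw [mul_comm 2 ε, ← mul_assoc, ← pow_succ, Nat.sub_add_cancel hk]
    rw [h2, ENNReal.ofReal_mul (by positivity),
      ENNReal.mul_div_mul_left _ _ (ENNReal.ofReal_pos.2 (by positivity)).ne'
        ENNReal.ofReal_ne_top]
  -- the main bound
  have hmain : ∀ ε : ℝ, 0 < ε →
      volume (Metric.closedBall p ε \ X) / volume (Metric.closedBall p ε)
        ≤ (∫⁻ v, Ψ ε v ∂ν) * (ENNReal.ofReal 2 / c) := by
    intro ε hε
    have hJ : ∫⁻ v, m ε v ∂ν = (∫⁻ v, Ψ ε v ∂ν) * ENNReal.ofReal (2*ε) := by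
      rw [← lintegral_mul_const' _ _ ENNReal.ofReal_ne_top]
      refine lintegral_congr fun v => ?_
      rw [hΨ]; simp only []
      rw [ENNReal.div_mul_cancel (ENNReal.ofReal_pos.2 (by linarith)).ne'
        ENNReal.ofReal_ne_top]
    have hvol : volume (Metric.closedBall p ε) = ENNReal.ofReal (ε^k) * c := by
      rw [hc, Measure.addHaar_closedBall _ p hε.le]
      congr 2
      simp [finrank_euclideanSpace]
    rw [htrans, hvol]
    calc volume (S ε) / (ENNReal.ofReal (ε^k) * c)
        ≤ (ENNReal.ofReal (ε^(k-1)) * ((∫⁻ v, Ψ ε v ∂ν) * ENNReal.ofReal (2*ε)))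
            / (ENNReal.ofReal (ε^k) * c) := by
          refine ENNReal.div_le_div_right ?_ _
          rw [← hJ]; exact hpolar ε hε
      _ = (∫⁻ v, Ψ ε v ∂ν) * (ENNReal.ofReal (ε^(k-1)) * ENNReal.ofReal (2*ε)
            / (ENNReal.ofReal (ε^k) * c)) := aux_ac _ _ _ _
      _ = (∫⁻ v, Ψ ε v ∂ν) * (ENNReal.ofReal 2 / c) := by rw [hkey ε hε]
  -- conclude
  have hRHS : Tendsto (fun ε => (∫⁻ v, Ψ ε v ∂ν) * (ENNReal.ofReal 2 / c))
      (𝓝[>] (0:ℝ)) (𝓝 0) := by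
    have := ENNReal.Tendsto.mul_const (b := ENNReal.ofReal 2 / c) hI
      (Or.inr (ENNReal.div_lt_top ENNReal.ofReal_ne_top hc0).ne)
    simpa using this
  have hg : Tendsto (fun ε => volume (Metric.closedBall p ε \ X)
      / volume (Metric.closedBall p ε)) (𝓝[>] (0:ℝ)) (𝓝 0) := by
    refine tendsto_of_tendsto_of_tendsto_of_le_of_le' (tendsto_const_nhds (x := (0:ℝ≥0∞)))
      hRHS (Eventually.of_forall fun ε => zero_le) ?_
    filter_upwards [self_mem_nhdsWithin] with ε (hε : 0 < ε)
    exact hmain ε hε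
  have hfin : Tendsto (fun ε => 1 - volume (Metric.closedBall p ε \ X)
      / volume (Metric.closedBall p ε)) (𝓝[>] (0:ℝ)) (𝓝 1) := by
    have := ENNReal.Tendsto.sub (tendsto_const_nhds (x := (1:ℝ≥0∞))) hg (Or.inl ENNReal.one_ne_top)
    simpa using this
  refine Tendsto.congr' ?_ hfin
  filter_upwards [self_mem_nhdsWithin] with ε (hε : 0 < ε)
  have hB0 : volume (Metric.closedBall p ε) ≠ 0 := (Metric.measure_closedBall_pos volume _ hε).ne'
  have hBT : volume (Metric.closedBall p ε) ≠ ∞ := measure_closedBall_lt_top.ne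
  rw [eq_comm, enn_ratio ?_ hB0 hBT]
  rw [Set.inter_comm]
  exact measure_inter_add_diff _ hX

end
end

section
/- Let f be a unimodal map (with critical point 0) satisfying the summability condition Σ_{k=0}^∞ 1/|Df^k(f(0))| < ∞. Then there exists an even polynomial vector field v on I with v(−1) = v(1) = 0 such that ν_f(v) = Σ_{k=0}^∞ v(f^k(0))/Df^k(f(0)) ≠ 0 (the series converging absolutely). -/
open MeasureTheory Set Filter Topology Function

noncomputable section

/-- For a unimodal map satisfying the summability condition
`Σ 1/|Df^k(f(0))| < ∞` there is an even polynomial vector field `v`, vanishing at `±1`,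
with `ν_f(v) = Σ v(f^k(0))/Df^k(f(0)) ≠ 0` (the series converging absolutely). -/
theorem exists_transverse_vector_field (f : ℝ → ℝ) (hf : IsUnimodal f)
    (hsum : Summable fun k : ℕ => 1 / |deriv (f^[k]) (f 0)|) :
    ∃ p : Polynomial ℝ, (∀ x : ℝ, p.eval (-x) = p.eval x) ∧
      p.eval (-1) = 0 ∧ p.eval 1 = 0 ∧
      Summable (fun k : ℕ => |p.eval (f^[k] 0) / deriv (f^[k]) (f 0)|) ∧
      (∑' k : ℕ, p.eval (f^[k] 0) / deriv (f^[k]) (f 0)) ≠ 0 := by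
  have hdiff : Differentiable ℝ f := hf.smooth.differentiable (by norm_num)
  set x : ℕ → ℝ := fun k => f^[k] 0 with hxdef
  set D : ℕ → ℝ := fun k => deriv (f^[k]) (f 0) with hDdef
  have hxI : ∀ k, x k ∈ II := by
    intro k
    induction k with
    | zero =>
      simp only [hxdef, Function.iterate_zero, id_eq]
      constructor <;> norm_num
    | succ n ih =>
      have : x (n + 1) = f (x n) := by
        simp only [hxdef, Function.iterate_succ_apply']
      rw [this]
      exact hf.mapsTo ih
  have hxsq : ∀ k, 0 ≤ 1 - (x k) ^ 2 ∧ 1 - (x k) ^ 2 ≤ 1 := by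
    intro k
    have h1 := (hxI k).1
    have h2 := (hxI k).2
    constructor <;> nlinarith
  have hx0 : x 0 = 0 := by simp [hxdef]
  have hD0 : D 0 = 1 := by simp [hDdef]
  have hDzero : ∀ k, x (k + 1) = 0 → D (k + 1) = 0 := by
    intro k hk
    have hcomp : f^[k + 1] = f ∘ f^[k] := Function.iterate_succ' f k
    have h1 : f^[k] (f 0) = x (k + 1) := by
      simp only [hxdef]
      rw [← Function.iterate_succ_apply]
    have : D (k + 1) = deriv f (f^[k] (f 0)) * deriv (f^[k]) (f 0) := by
      simp only [hDdef, hcomp]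
      exact deriv_comp _ (hdiff.differentiableAt) ((hdiff.iterate k).differentiableAt)
    rw [this, h1, hk, hf.critical, zero_mul]
  -- bound
  have hbound : ∀ (N : ℕ) (k : ℕ), ‖(1 - (x k) ^ 2) ^ N / D k‖ ≤ 1 / |D k| := by
    intro N k
    rcases eq_or_ne (D k) 0 with h | h
    · simp [h]
    · rw [Real.norm_eq_abs, abs_div,
        abs_of_nonneg (pow_nonneg (hxsq k).1 N)]
      gcongr
      exact pow_le_one₀ (hxsq k).1 (hxsq k).2
  -- pointwise limits
  have hlim : ∀ k : ℕ, Tendsto (fun N : ℕ => (1 - (x k) ^ 2) ^ N / D k) atTop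
      (nhds (if k = 0 then 1 else 0)) := by
    intro k
    match k with
    | 0 =>
      simp only [hx0, hD0, if_pos rfl]
      simpa using tendsto_const_nhds (x := (1 : ℝ)) (f := (atTop : Filter ℕ))
    | (k + 1) =>
      simp only [if_neg (Nat.succ_ne_zero k)]
      rcases eq_or_ne (x (k + 1)) 0 with h | h
      · have := hDzero k h
        simp [this]
      · have h1 : |1 - (x (k + 1)) ^ 2| < 1 := by
          rw [abs_lt]
          have h2 := (hxsq (k + 1)).1
          have h3 := (hxsq (k + 1)).2
          have h4 : 0 < (x (k + 1)) ^ 2 := by positivity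
          constructor <;> nlinarith
        have : Tendsto (fun N : ℕ => (1 - (x (k + 1)) ^ 2) ^ N) atTop (nhds 0) :=
          tendsto_pow_atTop_nhds_zero_of_abs_lt_one h1
        simpa using this.div_const (D (k + 1))
  -- dominated convergence
  have hkey : Tendsto (fun N : ℕ => ∑' k : ℕ, (1 - (x k) ^ 2) ^ N / D k) atTop
      (nhds (∑' k : ℕ, if k = 0 then (1 : ℝ) else 0)) :=
    tendsto_tsum_of_dominated_convergence hsum hlim
      (Filter.Eventually.of_forall fun N => hbound N)
  have htsum1 : (∑' k : ℕ, if k = 0 then (1 : ℝ) else 0) = 1 := by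
    rw [tsum_eq_single 0] <;> simp
  rw [htsum1] at hkey
  have hne : ∀ᶠ N : ℕ in atTop, (∑' k : ℕ, (1 - (x k) ^ 2) ^ N / D k) ≠ 0 :=
    hkey (isOpen_ne.mem_nhds one_ne_zero)
  obtain ⟨N, hNe, hN1⟩ := (hne.and (Filter.eventually_ge_atTop 1)).exists
  have heval : ∀ k, Polynomial.eval (f^[k] 0) (((1 : Polynomial ℝ) - Polynomial.X ^ 2) ^ N)
      = (1 - (x k) ^ 2) ^ N := by intro k; simp [hxdef]
  refine ⟨((1 : Polynomial ℝ) - Polynomial.X ^ 2) ^ N, ?_, ?_, ?_, ?_, ?_⟩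
  · intro t; simp
  · simp [zero_pow (by omega : N ≠ 0)]
  · simp [zero_pow (by omega : N ≠ 0)]
  · apply Summable.of_nonneg_of_le (fun k => abs_nonneg _) _ hsum
    intro k
    have h := hbound N k
    rw [Real.norm_eq_abs] at h
    rw [heval k]
    exact h
  · simpa only [heval] using hNe

end
end

section
/- Let F : (−ε, ε) × I → ℝ be a C¹ map, write f_t = F(t, ·), f = f_0, and v = (∂/∂t) f_t |_{t=0}. Fix n ≥ 0 and assume f^k(0) ∈ I and Df^k(f(0)) ≠ 0 for 0 ≤ k ≤ n (and that all iterates appearing are defined). Then the derivative of the critical orbit with respect to the parameter satisfies (d/dt) f_t^{n+1}(0) |_{t=0} = Df^n(f(0)) · Σ_{k=0}^n v(f^k(0))/Df^k(f(0)), where Df^0 = 1. -/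
open MeasureTheory Set Filter Topology Function

noncomputable section

/-- For a `C¹` family `f_t = F(t,·)` with `f = f_0` and
`v = (∂/∂t)f_t|_{t=0}`, the derivative of the critical orbit with respect to the
parameter satisfies
`(d/dt) f_t^{n+1}(0)|_{t=0} = Df^n(f(0)) · Σ_{k=0}^n v(f^k(0))/Df^k(f(0))`. -/
theorem parameter_derivative_formula (F : ℝ → ℝ → ℝ)
    (hF : ContDiff ℝ 1 (fun q : ℝ × ℝ => F q.1 q.2)) (n : ℕ)
    (hI : ∀ k ≤ n, (F 0)^[k] 0 ∈ II)
    (hD : ∀ k ≤ n, deriv ((F 0)^[k]) (F 0 0) ≠ 0) :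
    deriv (fun t => (F t)^[n + 1] 0) 0 =
      deriv ((F 0)^[n]) (F 0 0) *
        ∑ k ∈ Finset.range (n + 1),
          deriv (fun t => F t ((F 0)^[k] 0)) 0 / deriv ((F 0)^[k]) (F 0 0) := by
  set u : ℝ × ℝ → ℝ := fun q => F q.1 q.2 with hu_def
  have hu : Differentiable ℝ u := hF.differentiable one_ne_zero
  have hslice : ∀ x₀ : ℝ, HasDerivAt (F 0) (fderiv ℝ u (0, x₀) (0, 1)) x₀ := by
    intro x₀
    have h := (hu (0, x₀)).hasFDerivAt.comp_hasDerivAt x₀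
      (HasDerivAt.prodMk (hasDerivAt_const x₀ (0:ℝ)) (hasDerivAt_id x₀))
    exact h
  have hpar : ∀ x₀ : ℝ, HasDerivAt (fun t => F t x₀) (fderiv ℝ u (0, x₀) (1, 0)) 0 := by
    intro x₀
    have h := (hu (0, x₀)).hasFDerivAt.comp_hasDerivAt 0
      (HasDerivAt.prodMk (hasDerivAt_id (0:ℝ)) (hasDerivAt_const (0:ℝ) x₀))
    exact h
  have key : ∀ (g : ℝ → ℝ) (d : ℝ), HasDerivAt g d 0 →
      HasDerivAt (fun t => F t (g t))
        (deriv (fun t => F t (g 0)) 0 + deriv (F 0) (g 0) * d) 0 := by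
    intro g d hg
    have h := (hu (0, g 0)).hasFDerivAt.comp_hasDerivAt 0
      (HasDerivAt.prodMk (hasDerivAt_id (0:ℝ)) hg)
    have e : fderiv ℝ u (0, g 0) (1, d)
        = deriv (fun t => F t (g 0)) 0 + deriv (F 0) (g 0) * d := by
      rw [(hpar (g 0)).deriv, (hslice (g 0)).deriv]
      have h2 : ((1:ℝ), d) = ((1:ℝ), (0:ℝ)) + d • ((0:ℝ), (1:ℝ)) := by simp
      rw [h2, map_add, _root_.map_smul]
      simp [mul_comm]
    rw [← e]
    exact h
  have hfdiff : Differentiable ℝ (F 0) := fun x => (hslice x).differentiableAt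
  have hiter : ∀ m : ℕ, Differentiable ℝ ((F 0)^[m]) := by
    intro m
    induction m with
    | zero => simpa using differentiable_id
    | succ m ih =>
      rw [Function.iterate_succ']
      exact hfdiff.comp ih
  have hchain : ∀ (m : ℕ) (x : ℝ), deriv ((F 0)^[m+1]) x
      = deriv (F 0) ((F 0)^[m] x) * deriv ((F 0)^[m]) x := by
    intro m x
    rw [Function.iterate_succ']
    exact deriv_comp x (hfdiff _) ((hiter m) x)
  have main : ∀ m : ℕ, (∀ k ≤ m, deriv ((F 0)^[k]) (F 0 0) ≠ 0) →
      HasDerivAt (fun t => (F t)^[m+1] 0)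
        (deriv ((F 0)^[m]) (F 0 0) * ∑ k ∈ Finset.range (m+1),
          deriv (fun t => F t ((F 0)^[k] 0)) 0 / deriv ((F 0)^[k]) (F 0 0)) 0 := by
    intro m
    induction m with
    | zero =>
      intro _
      have h := key (fun _ => (0:ℝ)) 0 (hasDerivAt_const (0:ℝ) (0:ℝ))
      simpa using h
    | succ m ih =>
      intro hD'
      have hDm : ∀ k ≤ m, deriv ((F 0)^[k]) (F 0 0) ≠ 0 :=
        fun k hk => hD' k (hk.trans (Nat.le_succ m))
      have H := ih hDm
      have hk := key (fun t => (F t)^[m+1] 0) _ H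
      have hrw : (fun t => (F t)^[m+1+1] 0) = fun t => F t ((F t)^[m+1] 0) := by
        funext t
        rw [Function.iterate_succ_apply']
      rw [hrw]
      convert hk using 1
      have hx : (F 0)^[m] (F 0 0) = (F 0)^[m+1] 0 :=
        (Function.iterate_succ_apply (F 0) m 0).symm
      have hD1 : deriv ((F 0)^[m+1]) (F 0 0) ≠ 0 := hD' (m+1) le_rfl
      have hAB := hD1
      rw [hchain m (F 0 0), hx] at hAB
      rw [Finset.sum_range_succ, mul_add, hchain m (F 0 0), hx,
        mul_div_cancel₀ _ hAB]
      ring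
  exact (main n hD).deriv

end
end

section
/- Let X ⊂ ℝ be a measurable set such that for each x ∈ X there is a sequence D_n(x) of nested intervals containing x and converging to x (their lengths tend to 0), with the property that for all x₁, x₂ ∈ X and all n, the intervals D_n(x₁) and D_n(x₂) are either equal or disjoint. Let Q_n ⊂ ℝ be measurable sets and set q_n(x) = |Q_n ∩ D_n(x)| / |D_n(x)|. Let Y be the set of x ∈ X which belong to only finitely many of the sets Q_n. If Σ_n q_n(x) < ∞ for almost every x ∈ X, then |Y| = |X|, i.e. almost every point of X lies in only finitely many Q_n. -/
open MeasureTheory Set Filter Topology Function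

noncomputable section

open scoped ENNReal

/-- a Borel-Cantelli type lemma. Given nested intervals `D_n(x)`
shrinking to each `x ∈ X`, equal or disjoint for different points of `X`, and measurable
sets `Q_n` with `q_n(x) = |Q_n ∩ D_n(x)|/|D_n(x)|` satisfying `Σ q_n(x) < ∞` a.e. on `X`,
almost every point of `X` belongs to only finitely many `Q_n`. -/
theorem borel_cantelli_intervals (X : Set ℝ) (hX : MeasurableSet X)
    (D : ℕ → ℝ → Set ℝ)
    (hmem : ∀ x ∈ X, ∀ n, x ∈ D n x)
    (hint : ∀ x ∈ X, ∀ n, ∃ u v : ℝ, u < v ∧ D n x = Set.Icc u v)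
    (hnest : ∀ x ∈ X, ∀ n, D (n + 1) x ⊆ D n x)
    (hconv : ∀ x ∈ X, Tendsto (fun n => volume (D n x)) atTop (nhds 0))
    (hdisj : ∀ x₁ ∈ X, ∀ x₂ ∈ X, ∀ n, D n x₁ = D n x₂ ∨ Disjoint (D n x₁) (D n x₂))
    (Q : ℕ → Set ℝ) (hQ : ∀ n, MeasurableSet (Q n))
    (hsum : ∀ᵐ x, x ∈ X → Summable (fun n : ℕ =>
      (volume (Q n ∩ D n x)).toReal / (volume (D n x)).toReal)) :
    volume {x ∈ X | {n : ℕ | x ∈ Q n}.Infinite} = 0 := by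
  classical
  set T := {x ∈ X | {n : ℕ | x ∈ Q n}.Infinite} with hTdef
  -- basic facts about the intervals
  have hDmeas : ∀ x ∈ X, ∀ n, MeasurableSet (D n x) := by
    intro x hx n; obtain ⟨u, v, _, hD⟩ := hint x hx n; rw [hD]; exact measurableSet_Icc
  have hDpos : ∀ x ∈ X, ∀ n, volume (D n x) ≠ 0 := by
    intro x hx n; obtain ⟨u, v, huv, hD⟩ := hint x hx n
    rw [hD, Real.volume_Icc]
    simp only [ne_eq, ENNReal.ofReal_eq_zero, not_le]
    linarith
  have hDfin : ∀ x ∈ X, ∀ n, volume (D n x) ≠ ∞ := by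
    intro x hx n; obtain ⟨u, v, _, hD⟩ := hint x hx n
    rw [hD, Real.volume_Icc]; exact ENNReal.ofReal_ne_top
  have heqD : ∀ x ∈ X, ∀ y ∈ X, ∀ n, (D n x ∩ D n y).Nonempty → D n x = D n y := by
    intro x hx y hy n hne
    rcases hdisj x hx y hy n with h | h
    · exact h
    · exact absurd h (Set.not_disjoint_iff_nonempty_inter.mpr hne)
  -- canonical intervals indexed by rationals
  set E : ℕ → ℚ → Set ℝ := fun m r =>
    if h : ∃ x ∈ X, (r : ℝ) ∈ D m x then D m h.choose else ∅ with hEdef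
  have hEmem : ∀ (m : ℕ) (r : ℚ), ∀ x ∈ X, x ∈ E m r → E m r = D m x := by
    intro m r x hx hxE
    by_cases h : ∃ x ∈ X, (r : ℝ) ∈ D m x
    · have hEeq : E m r = D m h.choose := by simp only [hEdef]; exact dif_pos h
      have hc := h.choose_spec
      rw [hEeq] at hxE ⊢
      exact heqD _ hc.1 x hx m ⟨x, hxE, hmem x hx m⟩
    · have hEeq : E m r = ∅ := by simp only [hEdef]; exact dif_neg h
      rw [hEeq] at hxE; exact absurd hxE (Set.notMem_empty x)
  have hEex : ∀ x ∈ X, ∀ m, ∃ r : ℚ, x ∈ E m r ∧ E m r = D m x := by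
    intro x hx m
    obtain ⟨u, v, huv, hD⟩ := hint x hx m
    obtain ⟨r, hr1, hr2⟩ := exists_rat_btwn huv
    have hrD : (r : ℝ) ∈ D m x := by rw [hD]; exact ⟨le_of_lt hr1, le_of_lt hr2⟩
    have h : ∃ y ∈ X, (r : ℝ) ∈ D m y := ⟨x, hx, hrD⟩
    have hEeq : E m r = D m h.choose := by simp only [hEdef]; exact dif_pos h
    have hc := h.choose_spec
    have heq2 : D m h.choose = D m x := heqD _ hc.1 x hx m ⟨r, hc.2, hrD⟩
    exact ⟨r, by rw [hEeq, heq2]; exact hmem x hx m, by rw [hEeq, heq2]⟩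
  have hEmeas : ∀ m r, MeasurableSet (E m r) := by
    intro m r
    by_cases h : ∃ x ∈ X, (r : ℝ) ∈ D m x
    · have hEeq : E m r = D m h.choose := by simp only [hEdef]; exact dif_pos h
      rw [hEeq]; exact hDmeas _ h.choose_spec.1 m
    · have hEeq : E m r = ∅ := by simp only [hEdef]; exact dif_neg h
      rw [hEeq]; exact MeasurableSet.empty
  -- the density functions
  set g : ℕ → ℝ → ℝ≥0∞ := fun m y =>
    ⨆ r : ℚ, (E m r).indicator (fun _ => volume (Q m ∩ E m r) / volume (E m r)) y with hgdef
  have hgmeas : ∀ m, Measurable (g m) := by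
    intro m
    exact Measurable.iSup fun r => Measurable.indicator measurable_const (hEmeas m r)
  have hgval : ∀ (m : ℕ), ∀ x ∈ X, g m x = volume (Q m ∩ D m x) / volume (D m x) := by
    intro m x hx
    simp only [hgdef]
    apply le_antisymm
    · apply iSup_le; intro r
      by_cases hxr : x ∈ E m r
      · rw [Set.indicator_of_mem hxr, hEmem m r x hx hxr]
      · rw [Set.indicator_of_notMem hxr]; exact zero_le
    · obtain ⟨r, hxr, hEr⟩ := hEex x hx m
      refine le_trans ?_ (le_iSup _ r)
      rw [Set.indicator_of_mem hxr, hEr]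
  -- reduction to bounded sets
  suffices hR : ∀ R : ℕ, volume (T ∩ Set.Icc (-(R : ℝ)) R) = 0 by
    have hcov : T ⊆ ⋃ R : ℕ, T ∩ Set.Icc (-(R : ℝ)) R := by
      intro x hx
      obtain ⟨R, hR'⟩ := exists_nat_ge |x|
      exact Set.mem_iUnion.mpr ⟨R, hx, (abs_le.mp hR').1, (abs_le.mp hR').2⟩
    exact measure_mono_null hcov (measure_iUnion_null hR)
  intro R
  set C := volume (Set.Icc (-(R : ℝ)) R) with hCdef
  have hCfin : C ≠ ⊤ := by rw [hCdef, Real.volume_Icc]; exact ENNReal.ofReal_ne_top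
  have key : ∀ ε : ℝ≥0∞, 0 < ε → volume (T ∩ Set.Icc (-(R : ℝ)) R) ≤ 2 * ε * C := by
    intro ε hε
    set S : ℕ → Set ℝ := fun N =>
      (X ∩ {x | ∑' k : ℕ, g (N + k) x ≤ ε}) ∩ Set.Icc (-(R : ℝ)) R with hSdef
    have hSmeas : ∀ N, MeasurableSet (S N) := by
      intro N
      exact (hX.inter (measurableSet_le (Measurable.ennreal_tsum fun k => hgmeas (N + k))
        measurable_const)).inter measurableSet_Icc
    have hSsub : ∀ N, S N ⊆ X := fun N x hx => hx.1.1
    have hSIcc : ∀ N, S N ⊆ Set.Icc (-(R : ℝ)) R := fun N x hx => hx.2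
    have hSmono : Monotone S := by
      intro N N' hNN' x hx
      obtain ⟨d, rfl⟩ := Nat.exists_eq_add_of_le hNN'
      have hx2 : ∑' k : ℕ, g (N + k) x ≤ ε := hx.1.2
      refine ⟨⟨hx.1.1, show ∑' k : ℕ, g (N + d + k) x ≤ ε from ?_⟩, hx.2⟩
      calc ∑' k : ℕ, g (N + d + k) x = ∑' k : ℕ, (fun i => g (N + i) x) (d + k) := by
            apply tsum_congr; intro k
            show g (N + d + k) x = g (N + (d + k)) x
            rw [Nat.add_assoc]
        _ ≤ ∑' k : ℕ, g (N + k) x :=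
            ENNReal.tsum_comp_le_tsum_of_injective (add_right_injective d) _
        _ ≤ ε := hx2
    have hperN : ∀ N, volume (T ∩ S N) ≤ 2 * ε * C := by
      intro N
      set s := S N with hsdef
      set Z : ℕ → Set ℝ := fun j =>
        {x | x ∈ s ∧ ∀ m, N + j ≤ m → volume (D m x) ≤ 2 * volume (s ∩ D m x)} with hZdef
      have hZsub : ∀ j, Z j ⊆ s := fun j x hx => hx.1
      have hZmono : Monotone Z := by
        intro a b hab x hx
        exact ⟨hx.1, fun m hm => hx.2 m (le_trans (Nat.add_le_add_left hab N) hm)⟩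
      have hZcover : volume (s \ ⋃ j, Z j) = 0 := by
        have hbes := Besicovitch.ae_tendsto_measure_inter_div_of_measurableSet volume (hSmeas N)
        refine measure_mono_null ?_ (ae_iff.mp hbes)
        rintro x ⟨hxs, hxU⟩
        intro hten
        apply hxU
        have hxX : x ∈ X := hSsub N hxs
        have hten1 : Tendsto (fun r => volume (s ∩ Metric.closedBall x r) /
            volume (Metric.closedBall x r)) (nhdsWithin 0 (Set.Ioi 0)) (𝓝 1) := by
          have hind : s.indicator (1 : ℝ → ℝ≥0∞) x = 1 := by
            rw [Set.indicator_of_mem hxs]; rfl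
          rwa [hind] at hten
        have h34 : ENNReal.ofReal (3/4) < 1 := by
          rw [← ENNReal.ofReal_one]
          exact (ENNReal.ofReal_lt_ofReal_iff (by norm_num)).mpr (by norm_num)
        have hev := hten1.eventually (lt_mem_nhds h34)
        obtain ⟨δ, hδpos, hδ⟩ := mem_nhdsGT_iff_exists_Ioo_subset.mp hev
        have hδpos' : (0:ℝ) < δ := hδpos
        have hev2 := (hconv x hxX).eventually (gt_mem_nhds (ENNReal.ofReal_pos.mpr hδpos'))
        obtain ⟨M, hM⟩ := eventually_atTop.mp hev2
        refine Set.mem_iUnion.mpr ⟨M, hxs, ?_⟩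
        intro m hm
        have hmM : M ≤ m := by omega
        obtain ⟨u, v, huv, hD⟩ := hint x hxX m
        have hl : 0 < v - u := by linarith
        have hvol : volume (D m x) = ENNReal.ofReal (v - u) := by rw [hD, Real.volume_Icc]
        have hlδ : v - u < δ := by
          have h := hM m hmM
          rw [hvol] at h
          exact (ENNReal.ofReal_lt_ofReal_iff hδpos').mp h
        have hxin : x ∈ Set.Icc u v := hD ▸ hmem x hxX m
        have hDB : D m x ⊆ Metric.closedBall x (v - u) := by
          rw [hD]; intro y hy
          obtain ⟨hy1, hy2⟩ := hy
          rw [Metric.mem_closedBall, Real.dist_eq, abs_le]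
          exact ⟨by linarith [hxin.2], by linarith [hxin.1]⟩
        have hratio := hδ ⟨hl, hlδ⟩
        have hBvol : volume (Metric.closedBall x (v - u)) = ENNReal.ofReal (2 * (v - u)) :=
          Real.volume_closedBall x (v - u)
        have h1 : ENNReal.ofReal (3/4) * ENNReal.ofReal (2 * (v - u)) <
            volume (s ∩ Metric.closedBall x (v - u)) := by
          have hratio' : ENNReal.ofReal (3/4) < volume (s ∩ Metric.closedBall x (v - u)) /
              volume (Metric.closedBall x (v - u)) := hratio
          rw [hBvol] at hratio'
          exact (ENNReal.lt_div_iff_mul_lt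
            (Or.inl (ENNReal.ofReal_pos.mpr (by linarith)).ne')
            (Or.inl ENNReal.ofReal_ne_top)).mp hratio'
        have h2 : ENNReal.ofReal (3/4) * ENNReal.ofReal (2 * (v - u)) =
            ENNReal.ofReal ((v - u)/2) + ENNReal.ofReal (v - u) := by
          rw [← ENNReal.ofReal_mul (by norm_num), ← ENNReal.ofReal_add (by linarith) (by linarith)]
          congr 1; ring
        have hsplit : s ∩ Metric.closedBall x (v - u) ⊆
            (s ∩ D m x) ∪ (Metric.closedBall x (v - u) \ D m x) := by
          rintro y ⟨hys, hyB⟩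
          by_cases hyD : y ∈ D m x
          · exact Or.inl ⟨hys, hyD⟩
          · exact Or.inr ⟨hyB, hyD⟩
        have hdiffv : volume (Metric.closedBall x (v - u) \ D m x) ≤ ENNReal.ofReal (v - u) := by
          rw [measure_diff hDB (hDmeas x hxX m).nullMeasurableSet (hDfin x hxX m), hBvol, hvol,
            ← ENNReal.ofReal_sub _ (by linarith)]
          exact le_of_eq (by congr 1; ring)
        have h3 : ENNReal.ofReal ((v - u)/2) + ENNReal.ofReal (v - u) ≤
            volume (s ∩ D m x) + ENNReal.ofReal (v - u) := by
          rw [← h2]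
          refine le_trans h1.le (le_trans (measure_mono hsplit) ?_)
          exact le_trans (measure_union_le _ _) (add_le_add le_rfl hdiffv)
        have h4 : ENNReal.ofReal ((v - u)/2) ≤ volume (s ∩ D m x) :=
          (ENNReal.add_le_add_iff_right ENNReal.ofReal_ne_top).mp h3
        rw [hvol]
        calc ENNReal.ofReal (v - u) = 2 * ENNReal.ofReal ((v - u)/2) := by
              rw [show (2:ℝ≥0∞) = ENNReal.ofReal 2 from (ENNReal.ofReal_ofNat 2).symm,
                ← ENNReal.ofReal_mul (by norm_num)]
              congr 1; ring
          _ ≤ 2 * volume (s ∩ D m x) := mul_le_mul_right h4 2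
      have hcore : ∀ j : ℕ, volume (T ∩ Z j) ≤ 2 * ε * C := by
        intro j
        set M := N + j with hMdef
        set cond : ℕ → ℚ → Prop := fun m r => (Z j ∩ E m r).Nonempty ∧
          ∀ r' : ℚ, E m r' = E m r → Encodable.encode r ≤ Encodable.encode r' with hconddef
        have hper : ∀ (m : ℕ) (r : ℚ), M ≤ m → cond m r →
            volume (Q m ∩ E m r) ≤ 2 * ∫⁻ y in s ∩ E m r, g m y := by
          rintro m r hm ⟨⟨z, hzZ, hzE⟩, -⟩
          have hzs : z ∈ s := hZsub j hzZ
          have hzX : z ∈ X := hSsub N hzs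
          have hEz : E m r = D m z := hEmem m r z hzX hzE
          have hconst : ∀ y ∈ s ∩ E m r, g m y = g m z := by
            rintro y ⟨hys, hyE⟩
            have hyX : y ∈ X := hSsub N hys
            have hDyz : D m y = D m z := by
              have h1 : E m r = D m y := hEmem m r y hyX hyE
              rw [← h1, hEz]
            rw [hgval m y hyX, hgval m z hzX, hDyz]
          have hint1 : (∫⁻ y in s ∩ E m r, g m y) = g m z * volume (s ∩ E m r) := by
            rw [setLIntegral_congr_fun ((hSmeas N).inter (hEmeas m r))
              (fun y hy => hconst y hy)]
            exact setLIntegral_const _ _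
          have hzcond : volume (D m z) ≤ 2 * volume (s ∩ D m z) := hzZ.2 m hm
          calc volume (Q m ∩ E m r) = g m z * volume (E m r) := by
                rw [hEz, hgval m z hzX, ENNReal.div_mul_cancel (hDpos z hzX m) (hDfin z hzX m)]
            _ ≤ g m z * (2 * volume (s ∩ E m r)) := by
                refine mul_le_mul_right ?_ _
                rw [hEz]; exact hzcond
            _ = 2 * (g m z * volume (s ∩ E m r)) := by ring
            _ = 2 * ∫⁻ y in s ∩ E m r, g m y := by rw [hint1]
        have hsumr : ∀ m : ℕ, (∑' r : {r' : ℚ | cond m r'}, ∫⁻ y in s ∩ E m (r : ℚ), g m y)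
            ≤ ∫⁻ y in s, g m y := by
          intro m
          have hdisj2 : Pairwise (Function.onFun Disjoint
              fun r : {r' : ℚ | cond m r'} => s ∩ E m (r : ℚ)) := by
            rintro ⟨r1, h1⟩ ⟨r2, h2⟩ hne
            simp only [Function.onFun]
            by_contra hnd
            obtain ⟨y, hy1, hy2⟩ := Set.not_disjoint_iff.mp hnd
            have hyX : y ∈ X := hSsub N hy1.1
            have e1 : E m r1 = D m y := hEmem m r1 y hyX hy1.2
            have e2 : E m r2 = D m y := hEmem m r2 y hyX hy2.2
            have he : E m r2 = E m r1 := by rw [e1, e2]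
            have ha := h1.2 r2 he
            have hb := h2.2 r1 he.symm
            exact hne (Subtype.ext (Encodable.encode_injective (le_antisymm ha hb)))
          calc (∑' r : {r' : ℚ | cond m r'}, ∫⁻ y in s ∩ E m (r : ℚ), g m y)
              = ∫⁻ y in ⋃ r : {r' : ℚ | cond m r'}, (s ∩ E m (r : ℚ)), g m y := by
                rw [lintegral_iUnion (s := fun r : {r' : ℚ | cond m r'} => s ∩ E m (r : ℚ))
                  (fun r => (hSmeas N).inter (hEmeas m (r : ℚ))) hdisj2]
            _ ≤ ∫⁻ y in s, g m y :=
                lintegral_mono_set (Set.iUnion_subset fun r => Set.inter_subset_left)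
        have htail : ∀ x ∈ s, (∑' k : ℕ, g (M + k) x) ≤ ε := by
          intro x hxs
          have hx2 : (∑' k : ℕ, g (N + k) x) ≤ ε := hxs.1.2
          calc (∑' k : ℕ, g (M + k) x) = ∑' k : ℕ, (fun i => g (N + i) x) (j + k) := by
                apply tsum_congr; intro k
                show g (N + j + k) x = g (N + (j + k)) x
                rw [Nat.add_assoc]
            _ ≤ ∑' k : ℕ, g (N + k) x :=
                ENNReal.tsum_comp_le_tsum_of_injective (add_right_injective j) _
            _ ≤ ε := hx2
        have hsub2 : T ∩ Z j ⊆ ⋃ (k : ℕ), ⋃ r ∈ {r' : ℚ | cond (M + k) r'},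
            (Q (M + k) ∩ E (M + k) r) := by
          rintro x ⟨hxT, hxZ⟩
          have hxs : x ∈ s := hZsub j hxZ
          have hxX : x ∈ X := hSsub N hxs
          obtain ⟨m, hmQ, hMm⟩ := hxT.2.exists_gt M
          obtain ⟨r₁, hxr₁, hEr₁⟩ := hEex x hxX m
          have hex : {n : ℕ | ∃ r' : ℚ, Encodable.encode r' = n ∧ E m r' = D m x}.Nonempty :=
            ⟨_, r₁, rfl, hEr₁⟩
          obtain ⟨r₀, hr₀enc, hr₀E⟩ := Nat.sInf_mem hex
          have hcond : cond m r₀ := by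
            constructor
            · exact ⟨x, hxZ, hr₀E ▸ hmem x hxX m⟩
            · intro r' hr'
              rw [hr₀E] at hr'
              have hle := Nat.sInf_le (s := {n : ℕ | ∃ r'' : ℚ,
                Encodable.encode r'' = n ∧ E m r'' = D m x}) ⟨r', rfl, hr'⟩
              omega
          refine Set.mem_iUnion.mpr ⟨m - M, ?_⟩
          have hmm : M + (m - M) = m := by omega
          rw [hmm]
          exact Set.mem_iUnion.mpr ⟨r₀, Set.mem_iUnion.mpr ⟨hcond, hmQ, hr₀E ▸ hmem x hxX m⟩⟩
        calc volume (T ∩ Z j)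
            ≤ volume (⋃ (k : ℕ), ⋃ r ∈ {r' : ℚ | cond (M + k) r'},
                (Q (M + k) ∩ E (M + k) r)) := measure_mono hsub2
          _ ≤ ∑' k : ℕ, volume (⋃ r ∈ {r' : ℚ | cond (M + k) r'},
                (Q (M + k) ∩ E (M + k) r)) := measure_iUnion_le _
          _ ≤ ∑' k : ℕ, 2 * ∫⁻ y in s, g (M + k) y := by
              refine ENNReal.tsum_le_tsum fun k => ?_
              calc volume (⋃ r ∈ {r' : ℚ | cond (M + k) r'}, (Q (M + k) ∩ E (M + k) r))
                  ≤ ∑' r : {r' : ℚ | cond (M + k) r'}, volume (Q (M + k) ∩ E (M + k) (r : ℚ)) :=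
                    measure_biUnion_le volume (Set.to_countable _) _
                _ ≤ ∑' r : {r' : ℚ | cond (M + k) r'},
                      2 * ∫⁻ y in s ∩ E (M + k) (r : ℚ), g (M + k) y :=
                    ENNReal.tsum_le_tsum fun r => hper (M + k) (r : ℚ) (Nat.le_add_right M k) r.2
                _ = 2 * ∑' r : {r' : ℚ | cond (M + k) r'},
                      ∫⁻ y in s ∩ E (M + k) (r : ℚ), g (M + k) y := ENNReal.tsum_mul_left
                _ ≤ 2 * ∫⁻ y in s, g (M + k) y := mul_le_mul_right (hsumr (M + k)) 2
          _ = 2 * ∑' k : ℕ, ∫⁻ y in s, g (M + k) y := ENNReal.tsum_mul_left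
          _ = 2 * ∫⁻ y in s, (∑' k : ℕ, g (M + k) y) := by
              rw [← lintegral_tsum (fun k => (hgmeas (M + k)).aemeasurable)]
          _ ≤ 2 * ∫⁻ _ in s, ε := mul_le_mul_right (setLIntegral_mono measurable_const htail) 2
          _ = 2 * (ε * volume s) := by rw [setLIntegral_const]
          _ ≤ 2 * (ε * C) := mul_le_mul_right (mul_le_mul_right (measure_mono (hSIcc N)) ε) 2
          _ = 2 * ε * C := (mul_assoc 2 ε C).symm
      have hTsplit : T ∩ s ⊆ (⋃ j, (T ∩ Z j)) ∪ (s \ ⋃ j, Z j) := by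
        rintro x ⟨hxT, hxs⟩
        by_cases hxZ : x ∈ ⋃ j, Z j
        · obtain ⟨j, hj⟩ := Set.mem_iUnion.mp hxZ
          exact Or.inl (Set.mem_iUnion.mpr ⟨j, hxT, hj⟩)
        · exact Or.inr ⟨hxs, hxZ⟩
      calc volume (T ∩ s) ≤ volume (⋃ j, (T ∩ Z j)) + volume (s \ ⋃ j, Z j) :=
            le_trans (measure_mono hTsplit) (measure_union_le _ _)
        _ = volume (⋃ j, (T ∩ Z j)) := by rw [hZcover, add_zero]
        _ = ⨆ j, volume (T ∩ Z j) :=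
            Monotone.measure_iUnion (fun a b hab => Set.inter_subset_inter_right _ (hZmono hab))
        _ ≤ 2 * ε * C := iSup_le hcore
    set bad := {x : ℝ | ¬ (x ∈ X → Summable fun n : ℕ =>
      (volume (Q n ∩ D n x)).toReal / (volume (D n x)).toReal)} with hbaddef
    have hbadnull : volume bad = 0 := ae_iff.mp hsum
    have hTcov : T ∩ Set.Icc (-(R : ℝ)) R ⊆ bad ∪ ⋃ N, (T ∩ S N) := by
      rintro x ⟨hxT, hxIcc⟩
      by_cases hxbad : x ∈ bad
      · exact Or.inl hxbad
      · have hxX : x ∈ X := hxT.1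
        have hsx : Summable fun n : ℕ =>
            (volume (Q n ∩ D n x)).toReal / (volume (D n x)).toReal :=
          (not_not.mp hxbad) hxX
        have hfin : (∑' n : ℕ, g n x) ≠ ⊤ := by
          have hrw : ∀ n : ℕ, g n x = ENNReal.ofReal
              ((volume (Q n ∩ D n x)).toReal / (volume (D n x)).toReal) := by
            intro n
            rw [hgval n x hxX, ENNReal.ofReal_div_of_pos
              (ENNReal.toReal_pos (hDpos x hxX n) (hDfin x hxX n)),
              ENNReal.ofReal_toReal (ne_top_of_le_ne_top (hDfin x hxX n)
                (measure_mono Set.inter_subset_right)),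
              ENNReal.ofReal_toReal (hDfin x hxX n)]
          rw [tsum_congr hrw, ← ENNReal.ofReal_tsum_of_nonneg
            (fun n => div_nonneg ENNReal.toReal_nonneg ENNReal.toReal_nonneg) hsx]
          exact ENNReal.ofReal_ne_top
        have htail := ENNReal.tendsto_sum_nat_add (fun n => g n x) hfin
        obtain ⟨N, hN⟩ := (htail.eventually (gt_mem_nhds hε)).exists
        refine Or.inr (Set.mem_iUnion.mpr ⟨N, hxT, ⟨hxX, ?_⟩, hxIcc⟩)
        exact le_of_lt (lt_of_le_of_lt (le_of_eq (tsum_congr fun k => by rw [Nat.add_comm])) hN)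
    calc volume (T ∩ Set.Icc (-(R : ℝ)) R)
        ≤ volume bad + volume (⋃ N, T ∩ S N) :=
          le_trans (measure_mono hTcov) (measure_union_le _ _)
      _ = volume (⋃ N, T ∩ S N) := by rw [hbadnull, zero_add]
      _ = ⨆ N, volume (T ∩ S N) :=
          Monotone.measure_iUnion (fun a b hab => Set.inter_subset_inter_right _ (hSmono hab))
      _ ≤ 2 * ε * C := iSup_le hperN
  have hmono0 : ∀ n : ℕ, volume (T ∩ Set.Icc (-(R:ℝ)) R) ≤ 2 * ((n:ℝ≥0∞))⁻¹ * C := by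
    intro n
    exact key _ (ENNReal.inv_pos.mpr (ENNReal.natCast_ne_top n))
  have htend : Tendsto (fun n : ℕ => 2 * ((n:ℝ≥0∞))⁻¹ * C) atTop (𝓝 0) := by
    have heq : (fun n : ℕ => 2 * ((n:ℝ≥0∞))⁻¹ * C) = fun n : ℕ => ((n:ℝ≥0∞))⁻¹ * (2 * C) := by
      funext n; ring
    rw [heq]
    have h2C : 2 * C ≠ ⊤ := ENNReal.mul_ne_top (by simp) hCfin
    simpa using ENNReal.Tendsto.mul_const ENNReal.tendsto_inv_nat_nhds_zero (Or.inr h2C)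
  exact le_antisymm (ge_of_tendsto htend (Filter.Eventually.of_forall hmono0)) zero_le
end
end
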